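/- For all c > 0 and y > 0, the function θ ↦ e^{−yθ}·(√c/θ)·J₁(2θ√c) (extended by the value c at θ = 0) is integrable on [0,∞) and ∫₀^∞ e^{−yθ}·(√c/θ)·J₁(2θ√c) dθ = (−y + √(y² + 4c))/2. (Laplace transform computation in the proof of Theorem 3.2 of the paper.) -/

import Mathlib

open MeasureTheory Real Filter Set Topology

noncomputable def J0 (x : ℝ) : ℝ :=
  ∑' k : ℕ, (-1 : ℝ) ^ k * (x / 2) ^ (2 * k) / ((Nat.factorial k : ℝ)) ^ 2

noncomputable def J1 (x : ℝ) : ℝ :=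
  ∑' k : ℕ, (-1 : ℝ) ^ k * (x / 2) ^ (2 * k + 1) /
    ((Nat.factorial k : ℝ) * (Nat.factorial (k + 1) : ℝ))


/-- `F_c(θ) = (√c/θ) J₁(2θ√c)` extended by `F_c(0) = c`. -/
noncomputable def Fc (c : ℝ) (θ : ℝ) : ℝ :=
  if θ = 0 then c else Real.sqrt c / θ * J1 (2 * θ * Real.sqrt c)

namespace LaplaceAux

/-! ### Generic power series machinery -/

lemma summable_shift (b : ℕ → ℝ) (e : ℕ → ℕ)
    (h : ∀ r : ℝ, 0 < r → Summable fun k => |b k| * r ^ e k) (x : ℝ) :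
    Summable fun k => b k * x ^ e k := by
  apply Summable.of_norm
  apply Summable.of_nonneg_of_le (fun k => norm_nonneg _) _ (h (|x| + 1) (by positivity))
  intro k
  rw [norm_mul, norm_pow, Real.norm_eq_abs, Real.norm_eq_abs]
  have hx : |x| ^ e k ≤ (|x| + 1) ^ e k :=
    pow_le_pow_left₀ (abs_nonneg x) (by linarith) _
  exact mul_le_mul_of_nonneg_left hx (abs_nonneg _)

lemma summable_deriv_coeff (b : ℕ → ℝ) (e : ℕ → ℕ)
    (h : ∀ r : ℝ, 0 < r → Summable fun k => |b k| * r ^ e k) :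
    ∀ r : ℝ, 0 < r → Summable fun k => |b k * (e k : ℝ)| * r ^ (e k - 1) := by
  intro r hr
  apply Summable.of_nonneg_of_le (fun k => by positivity) (fun k => ?_)
    (((h (2 * r) (by positivity)).mul_left (1 / r)))
  have h1 : (e k : ℝ) * r ^ (e k - 1) ≤ (1 / r) * (2 * r) ^ e k := by
    rcases Nat.eq_zero_or_pos (e k) with h0 | h0
    · simp [h0]
      positivity
    · have hpow : r ^ (e k - 1) = r ^ e k / r := by
        rw [eq_div_iff hr.ne', ← pow_succ]
        congr 1; omega
      have hek : (e k : ℝ) ≤ 2 ^ e k := by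
        exact_mod_cast (Nat.lt_two_pow_self (n := e k)).le
      rw [hpow, mul_pow, one_div, mul_div_assoc', inv_mul_eq_div]
      gcongr
  calc |b k * (e k : ℝ)| * r ^ (e k - 1) = |b k| * ((e k : ℝ) * r ^ (e k - 1)) := by
        rw [abs_mul, Nat.abs_cast]; ring
    _ ≤ |b k| * ((1 / r) * (2 * r) ^ e k) := mul_le_mul_of_nonneg_left h1 (abs_nonneg _)
    _ = 1 / r * (|b k| * (2 * r) ^ e k) := by ring

lemma hasDerivAt_tsum_pow (b : ℕ → ℝ) (e : ℕ → ℕ)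
    (h : ∀ r : ℝ, 0 < r → Summable fun k => |b k| * r ^ e k) (x : ℝ) :
    HasDerivAt (fun y : ℝ => ∑' k, b k * y ^ e k)
      (∑' k, (b k * (e k : ℝ)) * x ^ (e k - 1)) x := by
  set R := |x| + 1 with hR
  have hRpos : (0:ℝ) < R := by positivity
  have hx : x ∈ Metric.ball (0 : ℝ) R := by
    simp only [Metric.mem_ball, Real.dist_eq, sub_zero, hR]
    linarith [abs_nonneg x]
  have main := hasDerivAt_tsum_of_isPreconnected
    (u := fun k => |b k * (e k : ℝ)| * R ^ (e k - 1))
    (summable_deriv_coeff b e h R hRpos) Metric.isOpen_ball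
    ((convex_ball (0:ℝ) R).isPreconnected)
    (fun k y _ => (hasDerivAt_pow (e k) y).const_mul (b k))
    (fun k y hy => ?_) (Metric.mem_ball_self hRpos)
    (summable_shift b e h 0) hx
  · have heq : (∑' k, (b k * (e k : ℝ)) * x ^ (e k - 1)) =
        ∑' n, b n * ((e n : ℝ) * x ^ (e n - 1)) := tsum_congr fun k => by ring
    rw [heq]; exact main
  · rw [Real.norm_eq_abs, abs_mul, abs_mul, abs_pow, Nat.abs_cast, ← mul_assoc]
    simp only [abs_mul, Nat.abs_cast]
    have hyR : |y| ≤ R := by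
      have := Metric.mem_ball.mp hy
      rw [Real.dist_eq, sub_zero] at this
      exact this.le
    gcongr

/-! ### Coefficients for J0, J1 -/

noncomputable def b0 (k : ℕ) : ℝ := (-1) ^ k / ((Nat.factorial k : ℝ) ^ 2 * 4 ^ k)

noncomputable def b1 (k : ℕ) : ℝ :=
  (-1) ^ k / ((Nat.factorial k : ℝ) * (Nat.factorial (k + 1) : ℝ) * 2 * 4 ^ k)

lemma abs_neg_one_pow_div (k : ℕ) {X : ℝ} (hX : 0 < X) : |(-1 : ℝ) ^ k / X| = 1 / X := by
  rw [abs_div, abs_pow, abs_neg, abs_one, one_pow, abs_of_pos hX]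

lemma fact_pos (k : ℕ) : (0:ℝ) < (Nat.factorial k : ℝ) := by
  exact_mod_cast k.factorial_pos

lemma one_le_fact (k : ℕ) : (1:ℝ) ≤ (Nat.factorial k : ℝ) := by
  exact_mod_cast k.factorial_pos

lemma hb0 : ∀ r : ℝ, 0 < r → Summable fun k => |b0 k| * r ^ (2 * k) := by
  intro r hr
  apply Summable.of_nonneg_of_le (fun k => by positivity) (fun k => ?_)
    (Real.summable_pow_div_factorial (r ^ 2))
  have h1 := one_le_fact k
  have h4 : (1:ℝ) ≤ 4 ^ k := one_le_pow₀ (by norm_num)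
  rw [b0, abs_neg_one_pow_div k (by positivity), div_mul_eq_mul_div, one_mul, pow_mul]
  gcongr
  nlinarith [fact_pos k]

lemma hb1 : ∀ r : ℝ, 0 < r → Summable fun k => |b1 k| * r ^ (2 * k + 1) := by
  intro r hr
  apply Summable.of_nonneg_of_le (fun k => by positivity) (fun k => ?_)
    ((Real.summable_pow_div_factorial (r ^ 2)).mul_left r)
  have h1 := one_le_fact k
  have h1' := one_le_fact (k + 1)
  have h4 : (1:ℝ) ≤ 4 ^ k := one_le_pow₀ (by norm_num)
  rw [b1, abs_neg_one_pow_div k (by positivity), div_mul_eq_mul_div, one_mul, pow_succ,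
    pow_mul, mul_comm ((r ^ 2) ^ k) r, mul_div_assoc]
  gcongr
  nlinarith [fact_pos k, fact_pos (k + 1), mul_le_mul h1 h1' (by norm_num) (by positivity)]

lemma hb1' : ∀ r : ℝ, 0 < r → Summable fun k => |b1 k| * r ^ (2 * k + 2) := by
  intro r hr
  apply Summable.of_nonneg_of_le (fun k => by positivity) (fun k => ?_)
    ((Real.summable_pow_div_factorial (r ^ 2)).mul_left (r ^ 2))
  have h1 := one_le_fact k
  have h1' := one_le_fact (k + 1)
  have h4 : (1:ℝ) ≤ 4 ^ k := one_le_pow₀ (by norm_num)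
  rw [b1, abs_neg_one_pow_div k (by positivity), div_mul_eq_mul_div, one_mul]
  have hrw : r ^ (2 * k + 2) = r ^ 2 * (r ^ 2) ^ k := by
    rw [← pow_mul]; ring
  rw [hrw, mul_div_assoc]
  gcongr
  nlinarith [fact_pos k, fact_pos (k + 1), mul_le_mul h1 h1' (by norm_num) (by positivity)]

lemma J0_eq (x : ℝ) : J0 x = ∑' k, b0 k * x ^ (2 * k) := by
  unfold J0 b0
  apply tsum_congr; intro k
  have h2 : ((2:ℝ)) ^ (2 * k) = 4 ^ k := by rw [pow_mul]; norm_num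
  rw [div_pow, h2]
  ring

lemma J1_eq (x : ℝ) : J1 x = ∑' k, b1 k * x ^ (2 * k + 1) := by
  unfold J1 b1
  apply tsum_congr; intro k
  have h2 : ((2:ℝ)) ^ (2 * k + 1) = 2 * 4 ^ k := by
    rw [pow_succ, pow_mul]; norm_num [mul_comm]
  rw [div_pow, h2]
  ring

lemma coeff_b0_succ (k : ℕ) : b0 (k + 1) * ((2 * (k + 1) : ℕ) : ℝ) = -b1 k := by
  unfold b0 b1
  have h1 := fact_pos k
  have h2 := fact_pos (k + 1)
  have h4 : (0:ℝ) < 4 ^ k := by positivity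
  push_cast [Nat.factorial_succ]
  field_simp
  ring

lemma coeff_b1 (k : ℕ) : b1 k * ((2 * k + 2 : ℕ) : ℝ) = b0 k := by
  unfold b0 b1
  have h1 := fact_pos k
  have h2 := fact_pos (k + 1)
  have h4 : (0:ℝ) < 4 ^ k := by positivity
  push_cast [Nat.factorial_succ]
  field_simp

lemma hasDerivAt_J0 (x : ℝ) : HasDerivAt J0 (-J1 x) x := by
  have h := hasDerivAt_tsum_pow b0 (fun k => 2 * k) hb0 x
  have hfun : (fun y : ℝ => ∑' k, b0 k * y ^ (2 * k)) = J0 :=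
    funext fun y => (J0_eq y).symm
  rw [hfun] at h
  convert h using 1
  have hs : Summable fun k => (b0 k * ((2 * k : ℕ) : ℝ)) * x ^ (2 * k - 1) :=
    summable_shift _ (fun k => 2 * k - 1) (summable_deriv_coeff b0 (fun k => 2 * k) hb0) x
  rw [J1_eq, ← tsum_neg, hs.tsum_eq_zero_add]
  have h0 : (b0 0 * ((2 * 0 : ℕ) : ℝ)) * x ^ (2 * 0 - 1) = 0 := by norm_num
  rw [h0, zero_add]
  apply tsum_congr; intro k
  have he : 2 * (k + 1) - 1 = 2 * k + 1 := by omega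
  rw [he, coeff_b0_succ]
  ring

lemma hasDerivAt_xJ1 (x : ℝ) : HasDerivAt (fun y => y * J1 y) (x * J0 x) x := by
  have h := hasDerivAt_tsum_pow b1 (fun k => 2 * k + 2) hb1' x
  have hfun : (fun y : ℝ => ∑' k, b1 k * y ^ (2 * k + 2)) = fun y => y * J1 y := by
    funext y
    rw [J1_eq, ← tsum_mul_left]
    apply tsum_congr; intro k
    ring
  rw [hfun] at h
  convert h using 1
  rw [J0_eq, ← tsum_mul_left]
  apply tsum_congr; intro k
  have he : 2 * k + 2 - 1 = 2 * k + 1 := by omega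
  rw [he, coeff_b1]
  ring

lemma hasDerivAt_J1 {x : ℝ} (hx : x ≠ 0) :
    HasDerivAt J1 (J0 x - J1 x / x) x := by
  have h1 := hasDerivAt_xJ1 x
  have hid : HasDerivAt (fun y : ℝ => y) 1 x := hasDerivAt_id x
  have h2 := h1.div hid hx
  have h3 : HasDerivAt J1 ((x * J0 x * x - x * J1 x * 1) / x ^ 2) x := by
    apply h2.congr_of_eventuallyEq
    filter_upwards [eventually_ne_nhds hx] with y hy
    show J1 y = y * J1 y / y
    rw [mul_div_cancel_left₀ _ hy]
  convert h3 using 1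
  field_simp

lemma continuous_J1 : Continuous J1 := by
  have : ∀ x : ℝ, HasDerivAt J1 (∑' k, (b1 k * ((2 * k + 1 : ℕ) : ℝ)) * x ^ (2 * k + 1 - 1)) x := by
    intro x
    have h := hasDerivAt_tsum_pow b1 (fun k => 2 * k + 1) hb1 x
    have hfun : (fun y : ℝ => ∑' k, b1 k * y ^ (2 * k + 1)) = J1 :=
      funext fun y => (J1_eq y).symm
    rwa [hfun] at h
  exact continuous_iff_continuousAt.mpr fun x => (this x).continuousAt

lemma continuous_J0 : Continuous J0 :=
  continuous_iff_continuousAt.mpr fun x => (hasDerivAt_J0 x).continuousAt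

lemma J0_zero : J0 0 = 1 := by
  unfold J0
  rw [tsum_eq_single 0]
  · norm_num
  · intro k hk
    have : 2 * k ≠ 0 := by omega
    simp [zero_pow this]

lemma J1_zero : J1 0 = 0 := by
  unfold J1
  rw [tsum_eq_single 0]
  · norm_num
  · intro k hk
    simp

lemma energy_le_one : ∀ x : ℝ, 0 ≤ x → J0 x ^ 2 + J1 x ^ 2 ≤ 1 := by
  intro x hx
  set E := fun x => J0 x ^ 2 + J1 x ^ 2 with hE
  have hanti : AntitoneOn E (Ici 0) := by
    apply antitoneOn_of_deriv_nonpos (convex_Ici 0)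
    · exact ((continuous_J0.pow 2).add (continuous_J1.pow 2)).continuousOn
    · intro z hz
      rw [interior_Ici] at hz
      have hz0 : z ≠ 0 := ne_of_gt hz
      exact (((hasDerivAt_J0 z).pow 2).add ((hasDerivAt_J1 hz0).pow 2)).differentiableAt.differentiableWithinAt
    · intro z hz
      rw [interior_Ici] at hz
      have hz0 : z ≠ 0 := ne_of_gt hz
      have hD := ((hasDerivAt_J0 z).pow 2).add ((hasDerivAt_J1 hz0).pow 2)
      show deriv (J0 ^ 2 + J1 ^ 2) z ≤ 0
      rw [hD.deriv]
      have heq : ((2:ℕ):ℝ) * J0 z ^ (2 - 1) * -J1 z + ((2:ℕ):ℝ) * J1 z ^ (2 - 1) * (J0 z - J1 z / z) =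
          -(2 * J1 z ^ 2) / z := by
        push_cast
        field_simp
        ring
      rw [heq]
      apply div_nonpos_of_nonpos_of_nonneg
      · nlinarith [sq_nonneg (J1 z)]
      · exact hz.le
  have h0 : E 0 = 1 := by
    simp [hE, J0_zero, J1_zero]
  calc E x ≤ E 0 := hanti (self_mem_Ici) hx hx
    _ = 1 := h0

lemma abs_J1_le_one {x : ℝ} (hx : 0 ≤ x) : |J1 x| ≤ 1 := by
  rw [← sq_le_one_iff_abs_le_one]
  nlinarith [energy_le_one x hx, sq_nonneg (J0 x)]

lemma abs_J0_le_one {x : ℝ} (hx : 0 ≤ x) : |J0 x| ≤ 1 := by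
  rw [← sq_le_one_iff_abs_le_one]
  nlinarith [energy_le_one x hx, sq_nonneg (J1 x)]

/-! ### The function `Fc` as a power series -/

noncomputable def dk (c : ℝ) (k : ℕ) : ℝ :=
  (-1) ^ k * c ^ (k + 1) / ((Nat.factorial k : ℝ) * (Nat.factorial (k + 1) : ℝ))

lemma abs_dk {c : ℝ} (hc : 0 < c) (k : ℕ) :
    |dk c k| = c ^ (k + 1) / ((Nat.factorial k : ℝ) * (Nat.factorial (k + 1) : ℝ)) := by
  unfold dk
  rw [abs_div, abs_mul, abs_pow, abs_pow, abs_neg, abs_one, one_pow, one_mul,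
    abs_of_pos hc, abs_of_pos (by positivity : (0:ℝ) < (Nat.factorial k : ℝ) * (Nat.factorial (k+1) : ℝ))]

lemma hdk {c : ℝ} (hc : 0 < c) : ∀ r : ℝ, 0 < r → Summable fun k => |dk c k| * r ^ (2 * k) := by
  intro r hr
  apply Summable.of_nonneg_of_le (fun k => by positivity) (fun k => ?_)
    ((Real.summable_pow_div_factorial (c * r ^ 2)).mul_left c)
  have h1 := one_le_fact (k + 1)
  rw [abs_dk hc, pow_mul, div_mul_eq_mul_div, pow_succ', mul_pow, mul_assoc,
    ← mul_pow, mul_div_assoc]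
  gcongr
  nlinarith [fact_pos k]

lemma hdk2 {c : ℝ} (hc : 0 < c) :
    ∀ r : ℝ, 0 < r → Summable fun k => |dk c k * ((2 * k : ℕ) : ℝ)| * r ^ (2 * k - 1) :=
  summable_deriv_coeff (dk c) (fun k => 2 * k) (hdk hc)

lemma hdk3 {c : ℝ} (hc : 0 < c) :
    ∀ r : ℝ, 0 < r →
      Summable fun k => |dk c k * ((2 * k : ℕ) : ℝ) * ((2 * k - 1 : ℕ) : ℝ)| * r ^ (2 * k - 1 - 1) :=
  summable_deriv_coeff (fun k => dk c k * ((2 * k : ℕ) : ℝ)) (fun k => 2 * k - 1) (hdk2 hc)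

lemma Fc_eq {c : ℝ} (hc : 0 < c) (θ : ℝ) : Fc c θ = ∑' k, dk c k * θ ^ (2 * k) := by
  by_cases hθ : θ = 0
  · subst hθ
    rw [Fc, if_pos rfl, tsum_eq_single 0]
    · unfold dk; norm_num
    · intro k hk
      have h2 : 2 * k ≠ 0 := by omega
      simp [zero_pow h2]
  · rw [Fc, if_neg hθ, J1_eq, ← tsum_mul_left]
    apply tsum_congr; intro k
    unfold b1 dk
    have hsqc : (0:ℝ) < Real.sqrt c := Real.sqrt_pos.mpr hc
    have hsq : Real.sqrt c ^ (2 * k + 1) = c ^ k * Real.sqrt c := by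
      rw [pow_succ, pow_mul, Real.sq_sqrt hc.le]
    have h2p : ((2:ℝ)) ^ (2 * k + 1) = 2 * 4 ^ k := by
      rw [pow_succ, pow_mul]; norm_num [mul_comm]
    rw [mul_pow, mul_pow, hsq, h2p]
    have hf1 := fact_pos k
    have hf2 := fact_pos (k + 1)
    field_simp
    ring_nf
    rw [Real.sq_sqrt hc.le]
    ring

noncomputable def Fd (c : ℝ) (θ : ℝ) : ℝ :=
  ∑' k, (dk c k * ((2 * k : ℕ) : ℝ)) * θ ^ (2 * k - 1)

noncomputable def Fdd (c : ℝ) (θ : ℝ) : ℝ :=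
  ∑' k, ((dk c k * ((2 * k : ℕ) : ℝ)) * ((2 * k - 1 : ℕ) : ℝ)) * θ ^ (2 * k - 1 - 1)

lemma hasDerivAt_Fc {c : ℝ} (hc : 0 < c) (θ : ℝ) : HasDerivAt (Fc c) (Fd c θ) θ := by
  have h := hasDerivAt_tsum_pow (dk c) (fun k => 2 * k) (hdk hc) θ
  have hfun : (fun y : ℝ => ∑' k, dk c k * y ^ (2 * k)) = Fc c :=
    funext fun y => (Fc_eq hc y).symm
  rwa [hfun] at h

lemma hasDerivAt_Fd {c : ℝ} (hc : 0 < c) (θ : ℝ) : HasDerivAt (Fd c) (Fdd c θ) θ := by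
  have h := hasDerivAt_tsum_pow (fun k => dk c k * ((2 * k : ℕ) : ℝ))
    (fun k => 2 * k - 1) (hdk2 hc) θ
  exact h

lemma continuous_Fc {c : ℝ} (hc : 0 < c) : Continuous (Fc c) :=
  continuous_iff_continuousAt.mpr fun θ => (hasDerivAt_Fc hc θ).continuousAt

lemma continuous_Fd {c : ℝ} (hc : 0 < c) : Continuous (Fd c) :=
  continuous_iff_continuousAt.mpr fun θ => (hasDerivAt_Fd hc θ).continuousAt

lemma continuous_Fdd {c : ℝ} (hc : 0 < c) : Continuous (Fdd c) :=
  continuous_iff_continuousAt.mpr fun θ =>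
    (hasDerivAt_tsum_pow (fun k => dk c k * ((2 * k : ℕ) : ℝ) * ((2 * k - 1 : ℕ) : ℝ))
      (fun k => 2 * k - 1 - 1) (hdk3 hc) θ).continuousAt

lemma dk_rec (c : ℝ) (k : ℕ) :
    dk c (k + 1) * ((2 * (k + 1) : ℕ) : ℝ) * ((2 * (k + 1) : ℕ) : ℝ) +
      dk c (k + 1) * ((2 * (k + 1) : ℕ) : ℝ) * 2 = -(4 * c) * dk c k := by
  unfold dk
  have h1 := fact_pos k
  have h2 := fact_pos (k + 1)
  have h3 := fact_pos (k + 2)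
  push_cast [Nat.factorial_succ]
  field_simp
  ring

lemma Fc_ode {c : ℝ} (hc : 0 < c) (θ : ℝ) :
    θ * Fdd c θ + 3 * Fd c θ + 4 * c * θ * Fc c θ = 0 := by
  have hsF : Summable fun k => dk c k * θ ^ (2 * k) :=
    summable_shift (dk c) (fun k => 2 * k) (hdk hc) θ
  have hsFd : Summable fun k => (dk c k * ((2 * k : ℕ) : ℝ)) * θ ^ (2 * k - 1) :=
    summable_shift _ (fun k => 2 * k - 1) (hdk2 hc) θ
  have hsFdd : Summable fun k =>
      ((dk c k * ((2 * k : ℕ) : ℝ)) * ((2 * k - 1 : ℕ) : ℝ)) * θ ^ (2 * k - 1 - 1) :=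
    summable_shift _ (fun k => 2 * k - 1 - 1) (hdk3 hc) θ
  -- combine θ * Fdd + 3 * Fd into a single sum
  set g : ℕ → ℝ := fun k =>
    θ * (((dk c k * ((2 * k : ℕ) : ℝ)) * ((2 * k - 1 : ℕ) : ℝ)) * θ ^ (2 * k - 1 - 1)) +
      3 * ((dk c k * ((2 * k : ℕ) : ℝ)) * θ ^ (2 * k - 1)) with hg
  have hsg : Summable g := (hsFdd.mul_left θ).add (hsFd.mul_left 3)
  have hkey : θ * Fdd c θ + 3 * Fd c θ = ∑' k, g k := by
    rw [Fdd, Fd, ← tsum_mul_left, ← tsum_mul_left, Summable.tsum_add (hsFdd.mul_left θ) (hsFd.mul_left 3)]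
  have hg_eq : ∀ k, g k = (dk c k * ((2 * k : ℕ) : ℝ) * ((2 * k : ℕ) : ℝ)
      + dk c k * ((2 * k : ℕ) : ℝ) * 2) * θ ^ (2 * k - 1) := by
    intro k
    rcases Nat.eq_zero_or_pos k with rfl | hk
    · simp [hg]
    · obtain ⟨m, hm⟩ : ∃ m, 2 * k = m + 2 := ⟨2 * k - 2, by omega⟩
      rw [hg]
      simp only []
      rw [hm]
      simp only [show m + 2 - 1 - 1 = m from by omega, show m + 2 - 1 = m + 1 from by omega]
      push_cast
      ring
  have hsg2 : Summable fun k => (dk c k * ((2 * k : ℕ) : ℝ) * ((2 * k : ℕ) : ℝ)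
      + dk c k * ((2 * k : ℕ) : ℝ) * 2) * θ ^ (2 * k - 1) := hsg.congr hg_eq
  have hshift : (∑' k, g k) = -(4 * c) * θ * Fc c θ := by
    rw [tsum_congr hg_eq, hsg2.tsum_eq_zero_add]
    have h0 : (dk c 0 * ((2 * 0 : ℕ) : ℝ) * ((2 * 0 : ℕ) : ℝ)
        + dk c 0 * ((2 * 0 : ℕ) : ℝ) * 2) * θ ^ (2 * 0 - 1) = 0 := by norm_num
    rw [h0, zero_add, Fc_eq hc, ← tsum_mul_left]
    apply tsum_congr; intro k
    have e1 : 2 * (k + 1) - 1 = 2 * k + 1 := by omega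
    rw [e1]
    have := dk_rec c k
    calc (dk c (k + 1) * ((2 * (k + 1) : ℕ) : ℝ) * ((2 * (k + 1) : ℕ) : ℝ)
        + dk c (k + 1) * ((2 * (k + 1) : ℕ) : ℝ) * 2) * θ ^ (2 * k + 1)
        = (-(4 * c) * dk c k) * θ ^ (2 * k + 1) := by rw [this]
      _ = -(4 * c) * θ * (dk c k * θ ^ (2 * k)) := by rw [pow_succ]; ring
  have := hkey.trans hshift
  linarith [this]

/-! ### Global bounds -/

noncomputable def MF (c : ℝ) : ℝ := ∑' k, |dk c k|
noncomputable def MFd (c : ℝ) : ℝ := ∑' k, |dk c k * ((2 * k : ℕ) : ℝ)|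
noncomputable def MFdd (c : ℝ) : ℝ :=
  ∑' k, |dk c k * ((2 * k : ℕ) : ℝ) * ((2 * k - 1 : ℕ) : ℝ)|

lemma summable_MF {c : ℝ} (hc : 0 < c) : Summable fun k => |dk c k| :=
  (hdk hc 1 one_pos).congr (by simp)

lemma summable_MFd {c : ℝ} (hc : 0 < c) : Summable fun k => |dk c k * ((2 * k : ℕ) : ℝ)| :=
  (hdk2 hc 1 one_pos).congr (by simp)

lemma summable_MFdd {c : ℝ} (hc : 0 < c) :
    Summable fun k => |dk c k * ((2 * k : ℕ) : ℝ) * ((2 * k - 1 : ℕ) : ℝ)| :=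
  (hdk3 hc 1 one_pos).congr (by simp)

lemma MF_nonneg {c : ℝ} (hc : 0 < c) : 0 ≤ MF c := tsum_nonneg fun k => abs_nonneg _
lemma MFd_nonneg {c : ℝ} (hc : 0 < c) : 0 ≤ MFd c := tsum_nonneg fun k => abs_nonneg _
lemma MFdd_nonneg {c : ℝ} (hc : 0 < c) : 0 ≤ MFdd c := tsum_nonneg fun k => abs_nonneg _

lemma abs_tsum_pow_le (b : ℕ → ℝ) (e : ℕ → ℕ) (hs : Summable fun k => |b k|)
    {θ : ℝ} (h0 : 0 ≤ θ) (h1 : θ ≤ 1) :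
    |∑' k, b k * θ ^ e k| ≤ ∑' k, |b k| := by
  have hle : ∀ k, |b k * θ ^ e k| ≤ |b k| := by
    intro k
    rw [abs_mul, abs_pow, abs_of_nonneg h0]
    calc |b k| * θ ^ e k ≤ |b k| * 1 :=
        mul_le_mul_of_nonneg_left (pow_le_one₀ h0 h1) (abs_nonneg _)
      _ = |b k| := mul_one _
  have hsum : Summable fun k => |b k * θ ^ e k| :=
    Summable.of_nonneg_of_le (fun k => abs_nonneg _) hle hs
  calc |∑' k, b k * θ ^ e k| ≤ ∑' k, |b k * θ ^ e k| := by
        have := norm_tsum_le_tsum_norm (f := fun k => b k * θ ^ e k)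
          (by simpa only [Real.norm_eq_abs] using hsum)
        simpa only [Real.norm_eq_abs] using this
    _ ≤ ∑' k, |b k| := Summable.tsum_le_tsum hle hsum hs

noncomputable def BF (c : ℝ) : ℝ := MF c + Real.sqrt c
noncomputable def BFd (c : ℝ) : ℝ := MFd c + (2 * Real.sqrt c + 2 * c)
noncomputable def BFdd (c : ℝ) : ℝ := MFdd c + (3 * BFd c + 4 * c * BF c)

lemma BF_nonneg {c : ℝ} (hc : 0 < c) : 0 ≤ BF c := by
  have := MF_nonneg hc; have := Real.sqrt_nonneg c; unfold BF; linarith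

lemma BFd_nonneg {c : ℝ} (hc : 0 < c) : 0 ≤ BFd c := by
  have := MFd_nonneg hc; have := Real.sqrt_nonneg c; unfold BFd; linarith

lemma BFdd_nonneg {c : ℝ} (hc : 0 < c) : 0 ≤ BFdd c := by
  have := MFdd_nonneg hc; have h1 := BFd_nonneg hc; have h2 := BF_nonneg hc
  unfold BFdd; nlinarith

lemma abs_Fc_le {c : ℝ} (hc : 0 < c) {θ : ℝ} (hθ : 0 ≤ θ) : |Fc c θ| ≤ BF c := by
  have hsqc : (0:ℝ) ≤ Real.sqrt c := Real.sqrt_nonneg c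
  rcases le_or_gt θ 1 with h1 | h1
  · rw [Fc_eq hc]
    calc |∑' k, dk c k * θ ^ (2 * k)| ≤ ∑' k, |dk c k| :=
        abs_tsum_pow_le (dk c) (fun k => 2 * k) (summable_MF hc) hθ h1
      _ ≤ BF c := by unfold BF MF; linarith
  · have hθ0 : θ ≠ 0 := by linarith
    rw [Fc, if_neg hθ0, abs_mul, abs_div, abs_of_nonneg hsqc, abs_of_nonneg hθ]
    have hx : (0:ℝ) ≤ 2 * θ * Real.sqrt c := by positivity
    have hJ : |J1 (2 * θ * Real.sqrt c)| ≤ 1 := abs_J1_le_one hx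
    have h2 : Real.sqrt c / θ ≤ Real.sqrt c := by
      rw [div_le_iff₀ (by linarith : (0:ℝ) < θ)]
      nlinarith
    calc Real.sqrt c / θ * |J1 (2 * θ * Real.sqrt c)| ≤ Real.sqrt c / θ * 1 :=
        mul_le_mul_of_nonneg_left hJ (by positivity)
      _ = Real.sqrt c / θ := mul_one _
      _ ≤ Real.sqrt c := h2
      _ ≤ BF c := by unfold BF; linarith [MF_nonneg hc]

lemma Fd_closed {c : ℝ} (hc : 0 < c) {θ : ℝ} (hθ : 0 < θ) :
    Fd c θ = (0 * θ - Real.sqrt c * 1) / θ ^ 2 * J1 (2 * θ * Real.sqrt c)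
      + Real.sqrt c / θ * ((J0 (2 * θ * Real.sqrt c) -
          J1 (2 * θ * Real.sqrt c) / (2 * θ * Real.sqrt c)) * (2 * Real.sqrt c)) := by
  have hs0 : 0 < Real.sqrt c := Real.sqrt_pos.mpr hc
  have hx0 : (2 * θ * Real.sqrt c) ≠ 0 := by positivity
  have hlin : HasDerivAt (fun t : ℝ => 2 * t * Real.sqrt c) (2 * Real.sqrt c) θ := by
    have h := (hasDerivAt_id θ).const_mul (2 * Real.sqrt c)
    have h2 : HasDerivAt (fun t : ℝ => 2 * t * Real.sqrt c) (2 * Real.sqrt c * 1) θ := by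
      apply h.congr_of_eventuallyEq
      filter_upwards with t
      simp only [id_eq]
      ring
    simpa using h2
  have hJd := hasDerivAt_J1 hx0
  have hcomp : HasDerivAt (fun t : ℝ => J1 (2 * t * Real.sqrt c))
      ((J0 (2 * θ * Real.sqrt c) - J1 (2 * θ * Real.sqrt c) / (2 * θ * Real.sqrt c)) *
        (2 * Real.sqrt c)) θ := by have h := HasDerivAt.comp θ hJd hlin; exact h
  have hquot : HasDerivAt (fun t : ℝ => Real.sqrt c / t)
      ((0 * θ - Real.sqrt c * 1) / θ ^ 2) θ := by
    have := (hasDerivAt_const θ (Real.sqrt c)).div (hasDerivAt_id θ) (ne_of_gt hθ)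
    exact this
  have hprod := hquot.mul hcomp
  have hFc' : HasDerivAt (Fc c)
      ((0 * θ - Real.sqrt c * 1) / θ ^ 2 * J1 (2 * θ * Real.sqrt c)
        + Real.sqrt c / θ * ((J0 (2 * θ * Real.sqrt c) -
            J1 (2 * θ * Real.sqrt c) / (2 * θ * Real.sqrt c)) * (2 * Real.sqrt c))) θ := by
    apply hprod.congr_of_eventuallyEq
    filter_upwards [eventually_ne_nhds (ne_of_gt hθ)] with t ht
    rw [Fc, if_neg ht]
    rfl
  exact (hasDerivAt_Fc hc θ).unique hFc'

lemma abs_Fd_le {c : ℝ} (hc : 0 < c) {θ : ℝ} (hθ : 0 ≤ θ) : |Fd c θ| ≤ BFd c := by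
  rcases le_or_gt θ 1 with h1 | h1
  · rw [Fd]
    calc |∑' k, (dk c k * ((2 * k : ℕ) : ℝ)) * θ ^ (2 * k - 1)|
        ≤ ∑' k, |dk c k * ((2 * k : ℕ) : ℝ)| :=
        abs_tsum_pow_le _ (fun k => 2 * k - 1) (summable_MFd hc) hθ h1
      _ ≤ BFd c := by
        unfold BFd MFd
        have := Real.sqrt_nonneg c
        linarith
  · set s := Real.sqrt c with hs
    have hs0 : 0 < s := Real.sqrt_pos.mpr hc
    have hs2 : s ^ 2 = c := Real.sq_sqrt hc.le
    have hθ0 : 0 < θ := by linarith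
    have hx0 : (0:ℝ) < 2 * θ * s := by positivity
    have hJ1 := abs_J1_le_one hx0.le
    have hJ0 := abs_J0_le_one hx0.le
    rw [Fd_closed hc hθ0, ← hs]
    have t1 : |(0 * θ - s * 1) / θ ^ 2 * J1 (2 * θ * s)| ≤ s / θ ^ 2 := by
      rw [abs_mul, abs_div]
      have he : (0 * θ - s * 1) = -s := by ring
      rw [he, abs_neg, abs_of_pos hs0, abs_of_pos (pow_pos hθ0 2)]
      calc s / θ ^ 2 * |J1 (2 * θ * s)| ≤ s / θ ^ 2 * 1 :=
          mul_le_mul_of_nonneg_left hJ1 (by positivity)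
        _ = s / θ ^ 2 := mul_one _
    have t2 : |s / θ * ((J0 (2 * θ * s) - J1 (2 * θ * s) / (2 * θ * s)) * (2 * s))|
        ≤ s / θ * ((1 + 1 / (2 * θ * s)) * (2 * s)) := by
      rw [abs_mul, abs_mul, abs_of_nonneg (by positivity : (0:ℝ) ≤ s / θ),
        abs_of_nonneg (by positivity : (0:ℝ) ≤ 2 * s)]
      have hd : |J0 (2 * θ * s) - J1 (2 * θ * s) / (2 * θ * s)| ≤ 1 + 1 / (2 * θ * s) := by
        rw [sub_eq_add_neg]
        refine (abs_add_le _ _).trans ?_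
        rw [abs_neg, abs_div, abs_of_pos hx0]
        gcongr
      gcongr
    have e2 : s / θ * ((1 + 1 / (2 * θ * s)) * (2 * s)) = 2 * s ^ 2 / θ + s / θ ^ 2 := by
      field_simp
    have b1 : s / θ ^ 2 ≤ s := by
      rw [div_le_iff₀ (by positivity)]
      nlinarith
    have b2 : 2 * s ^ 2 / θ ≤ 2 * s ^ 2 := by
      rw [div_le_iff₀ hθ0]
      nlinarith
    calc |(0 * θ - s * 1) / θ ^ 2 * J1 (2 * θ * s)
          + s / θ * ((J0 (2 * θ * s) - J1 (2 * θ * s) / (2 * θ * s)) * (2 * s))|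
        ≤ |(0 * θ - s * 1) / θ ^ 2 * J1 (2 * θ * s)|
          + |s / θ * ((J0 (2 * θ * s) - J1 (2 * θ * s) / (2 * θ * s)) * (2 * s))| := abs_add_le _ _
      _ ≤ s / θ ^ 2 + s / θ * ((1 + 1 / (2 * θ * s)) * (2 * s)) := add_le_add t1 t2
      _ = s / θ ^ 2 + (2 * s ^ 2 / θ + s / θ ^ 2) := by rw [e2]
      _ ≤ s + (2 * s ^ 2 + s) := by linarith
      _ ≤ BFd c := by
        unfold BFd
        have := MFd_nonneg hc
        nlinarith

lemma abs_Fdd_le {c : ℝ} (hc : 0 < c) {θ : ℝ} (hθ : 0 ≤ θ) : |Fdd c θ| ≤ BFdd c := by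
  rcases le_or_gt θ 1 with h1 | h1
  · rw [Fdd]
    calc |∑' k, ((dk c k * ((2 * k : ℕ) : ℝ)) * ((2 * k - 1 : ℕ) : ℝ)) * θ ^ (2 * k - 1 - 1)|
        ≤ ∑' k, |dk c k * ((2 * k : ℕ) : ℝ) * ((2 * k - 1 : ℕ) : ℝ)| :=
        abs_tsum_pow_le _ (fun k => 2 * k - 1 - 1) (summable_MFdd hc) hθ h1
      _ ≤ BFdd c := by
        unfold BFdd MFdd
        have h2 := BFd_nonneg hc
        have h3 := BF_nonneg hc
        nlinarith
  · have hθ0 : 0 < θ := by linarith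
    have hode := Fc_ode hc θ
    have hF := abs_Fc_le hc hθ
    have hFd := abs_Fd_le hc hθ
    have heq : Fdd c θ = (-(3 * Fd c θ) - 4 * c * θ * Fc c θ) / θ := by
      field_simp
      linarith
    rw [heq, abs_div, abs_of_pos hθ0, div_le_iff₀ hθ0]
    have htri : |(-(3 * Fd c θ) - 4 * c * θ * Fc c θ)|
        ≤ 3 * |Fd c θ| + 4 * c * θ * |Fc c θ| := by
      rw [sub_eq_add_neg]
      refine (abs_add_le _ _).trans ?_
      rw [abs_neg, abs_neg, abs_mul, abs_mul, abs_mul, abs_mul]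
      rw [abs_of_nonneg (by norm_num : (0:ℝ) ≤ 3), abs_of_nonneg (by norm_num : (0:ℝ) ≤ 4),
        abs_of_pos hc, abs_of_pos hθ0]
    have hB3 := BFd_nonneg hc
    have hB4 := BF_nonneg hc
    have hM := MFdd_nonneg hc
    calc |(-(3 * Fd c θ) - 4 * c * θ * Fc c θ)|
        ≤ 3 * |Fd c θ| + 4 * c * θ * |Fc c θ| := htri
      _ ≤ 3 * BFd c + 4 * c * θ * BF c := by
        have hm1 : 3 * |Fd c θ| ≤ 3 * BFd c := by linarith
        have hm2 : 4 * c * θ * |Fc c θ| ≤ 4 * c * θ * BF c := by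
          apply mul_le_mul_of_nonneg_left hF (by positivity)
        linarith
      _ ≤ BFdd c * θ := by
        unfold BFdd
        nlinarith


/-! ### Integrability helpers -/

lemma integrable_exp_mul {y : ℝ} (hy : 0 < y) (G : ℝ → ℝ) (hGc : Continuous G)
    (B : ℝ) (hB : ∀ θ : ℝ, 0 ≤ θ → |G θ| ≤ B) :
    IntegrableOn (fun θ => Real.exp (-y * θ) * G θ) (Ioi 0) := by
  apply Integrable.mono' ((exp_neg_integrableOn_Ioi 0 hy).const_mul B)
  · exact (Continuous.mul (by continuity) hGc).aestronglyMeasurable.restrict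
  · rw [ae_restrict_iff' measurableSet_Ioi]
    apply Filter.Eventually.of_forall
    intro θ hθ
    rw [Real.norm_eq_abs, abs_mul, abs_of_pos (Real.exp_pos _)]
    calc Real.exp (-y * θ) * |G θ| ≤ Real.exp (-y * θ) * B :=
        mul_le_mul_of_nonneg_left (hB θ (le_of_lt hθ)) (Real.exp_pos _).le
      _ = B * Real.exp (-y * θ) := by ring

lemma theta_exp_le {y : ℝ} (hy : 0 < y) {θ : ℝ} (hθ : 0 ≤ θ) :
    θ * Real.exp (-y * θ) ≤ 2 / y * Real.exp (-(y / 2) * θ) := by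
  have h1 : y / 2 * θ ≤ Real.exp (y / 2 * θ) := by
    have := Real.add_one_le_exp (y / 2 * θ)
    linarith
  calc θ * Real.exp (-y * θ) = 2 / y * (y / 2 * θ * Real.exp (-y * θ)) := by
        field_simp
    _ ≤ 2 / y * (Real.exp (y / 2 * θ) * Real.exp (-y * θ)) := by
        apply mul_le_mul_of_nonneg_left _ (by positivity)
        exact mul_le_mul_of_nonneg_right h1 (Real.exp_pos _).le
    _ = 2 / y * Real.exp (-(y / 2) * θ) := by
        rw [← Real.exp_add]; congr 1; ring

lemma integrable_theta_exp_mul {y : ℝ} (hy : 0 < y) (G : ℝ → ℝ) (hGc : Continuous G)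
    (B : ℝ) (hB : ∀ θ : ℝ, 0 ≤ θ → |G θ| ≤ B) :
    IntegrableOn (fun θ => θ * (Real.exp (-y * θ) * G θ)) (Ioi 0) := by
  have hB0 : 0 ≤ B := (abs_nonneg _).trans (hB 0 le_rfl)
  apply Integrable.mono' ((exp_neg_integrableOn_Ioi 0 (half_pos hy)).const_mul (B * (2 / y)))
  · exact (continuous_id.mul (Continuous.mul (by continuity) hGc)).aestronglyMeasurable.restrict
  · rw [ae_restrict_iff' measurableSet_Ioi]
    apply Filter.Eventually.of_forall
    intro θ hθ
    have hθ0 : (0:ℝ) ≤ θ := le_of_lt hθ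
    rw [Real.norm_eq_abs, abs_mul, abs_mul, abs_of_nonneg hθ0, abs_of_pos (Real.exp_pos _)]
    calc θ * (Real.exp (-y * θ) * |G θ|) ≤ θ * (Real.exp (-y * θ) * B) := by
          apply mul_le_mul_of_nonneg_left _ hθ0
          exact mul_le_mul_of_nonneg_left (hB θ hθ0) (Real.exp_pos _).le
      _ = B * (θ * Real.exp (-y * θ)) := by ring
      _ ≤ B * (2 / y * Real.exp (-(y / 2) * θ)) :=
          mul_le_mul_of_nonneg_left (theta_exp_le hy hθ0) hB0
      _ = B * (2 / y) * Real.exp (-(y / 2) * θ) := by ring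

lemma tendsto_exp_neg_mul {y : ℝ} (hy : 0 < y) :
    Tendsto (fun θ : ℝ => Real.exp (-y * θ)) atTop (𝓝 0) := by
  have h1 : Tendsto (fun θ : ℝ => y * θ) atTop atTop :=
    Tendsto.const_mul_atTop hy tendsto_id
  have h2 := Real.tendsto_exp_neg_atTop_nhds_zero.comp h1
  apply h2.congr
  intro θ
  simp [Function.comp, neg_mul]

lemma tendsto_exp_mul_zero {y : ℝ} (hy : 0 < y) (G : ℝ → ℝ) (B : ℝ)
    (hB : ∀ θ : ℝ, 0 ≤ θ → |G θ| ≤ B) :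
    Tendsto (fun θ => Real.exp (-y * θ) * G θ) atTop (𝓝 0) := by
  apply squeeze_zero_norm' (a := fun θ => B * Real.exp (-y * θ))
  · filter_upwards [eventually_ge_atTop (0:ℝ)] with θ hθ
    rw [Real.norm_eq_abs, abs_mul, abs_of_pos (Real.exp_pos _)]
    calc Real.exp (-y * θ) * |G θ| ≤ Real.exp (-y * θ) * B :=
        mul_le_mul_of_nonneg_left (hB θ hθ) (Real.exp_pos _).le
      _ = B * Real.exp (-y * θ) := by ring
  · simpa using (tendsto_exp_neg_mul hy).const_mul B

lemma tendsto_theta_exp_mul_zero {y : ℝ} (hy : 0 < y) (G : ℝ → ℝ) (B : ℝ)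
    (hB : ∀ θ : ℝ, 0 ≤ θ → |G θ| ≤ B) :
    Tendsto (fun θ => θ * (Real.exp (-y * θ) * G θ)) atTop (𝓝 0) := by
  have hB0 : 0 ≤ B := (abs_nonneg _).trans (hB 0 le_rfl)
  apply squeeze_zero_norm' (a := fun θ => B * (2 / y) * Real.exp (-(y / 2) * θ))
  · filter_upwards [eventually_ge_atTop (0:ℝ)] with θ hθ
    rw [Real.norm_eq_abs, abs_mul, abs_mul, abs_of_nonneg hθ, abs_of_pos (Real.exp_pos _)]
    calc θ * (Real.exp (-y * θ) * |G θ|) ≤ θ * (Real.exp (-y * θ) * B) := by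
          apply mul_le_mul_of_nonneg_left _ hθ
          exact mul_le_mul_of_nonneg_left (hB θ hθ) (Real.exp_pos _).le
      _ = B * (θ * Real.exp (-y * θ)) := by ring
      _ ≤ B * (2 / y * Real.exp (-(y / 2) * θ)) :=
          mul_le_mul_of_nonneg_left (theta_exp_le hy hθ) hB0
      _ = B * (2 / y) * Real.exp (-(y / 2) * θ) := by ring
  · simpa using (tendsto_exp_neg_mul (half_pos hy)).const_mul (B * (2 / y))

/-! ### The derivative of `exp (-y θ) * W θ` in `θ` -/

lemma hasDerivAt_exp_neg {y θ : ℝ} :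
    HasDerivAt (fun t : ℝ => Real.exp (-y * t)) (-y * Real.exp (-y * θ)) θ := by
  have hlin : HasDerivAt (fun t : ℝ => -y * t) (-y) θ := by
    simpa using (hasDerivAt_id θ).const_mul (-y)
  have h2 := (Real.hasDerivAt_exp (-y * θ)).comp θ hlin
  have h3 : HasDerivAt (fun t : ℝ => Real.exp (-y * t)) (Real.exp (-y * θ) * (-y)) θ := h2
  convert h3 using 1
  ring

lemma hasDerivAt_exp_mul {y θ : ℝ} {W Wd : ℝ → ℝ} (hW : HasDerivAt W (Wd θ) θ) :
    HasDerivAt (fun t => Real.exp (-y * t) * W t)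
      (Real.exp (-y * θ) * Wd θ - y * (Real.exp (-y * θ) * W θ)) θ := by
  have := hasDerivAt_exp_neg (y := y) (θ := θ) |>.mul hW
  exact this.congr_deriv (by ring)

/-! ### Integration by parts identities -/

section IBP

variable {c y : ℝ}

lemma Fc_zero (c : ℝ) : Fc c 0 = c := by rw [Fc, if_pos rfl]

lemma ibp1 (hc : 0 < c) (hy : 0 < y) :
    ∫ θ in Ioi (0:ℝ), (Real.exp (-y * θ) * Fd c θ - y * (Real.exp (-y * θ) * Fc c θ)) = -c := by
  have hint : IntegrableOn
      (fun θ => Real.exp (-y * θ) * Fd c θ - y * (Real.exp (-y * θ) * Fc c θ)) (Ioi 0) := by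
    apply Integrable.sub
    · exact integrable_exp_mul hy (Fd c) (continuous_Fd hc) (BFd c) (fun θ h => abs_Fd_le hc h)
    · exact (integrable_exp_mul hy (Fc c) (continuous_Fc hc) (BF c)
        (fun θ h => abs_Fc_le hc h)).const_mul y
  have hderiv : ∀ θ ∈ Ici (0:ℝ), HasDerivAt (fun t => Real.exp (-y * t) * Fc c t)
      (Real.exp (-y * θ) * Fd c θ - y * (Real.exp (-y * θ) * Fc c θ)) θ :=
    fun θ _ => hasDerivAt_exp_mul (hasDerivAt_Fc hc θ)
  have htend : Tendsto (fun θ => Real.exp (-y * θ) * Fc c θ) atTop (𝓝 0) :=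
    tendsto_exp_mul_zero hy (Fc c) (BF c) (fun θ h => abs_Fc_le hc h)
  have := integral_Ioi_of_hasDerivAt_of_tendsto' hderiv hint htend
  rw [this]
  simp [Fc_zero]

lemma ibp2 (hc : 0 < c) (hy : 0 < y) :
    ∫ θ in Ioi (0:ℝ), (Real.exp (-y * θ) * Fc c θ +
      θ * (Real.exp (-y * θ) * Fd c θ - y * (Real.exp (-y * θ) * Fc c θ))) = 0 := by
  have hint : IntegrableOn (fun θ => Real.exp (-y * θ) * Fc c θ +
      θ * (Real.exp (-y * θ) * Fd c θ - y * (Real.exp (-y * θ) * Fc c θ))) (Ioi 0) := by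
    apply Integrable.add
    · exact integrable_exp_mul hy (Fc c) (continuous_Fc hc) (BF c) (fun θ h => abs_Fc_le hc h)
    · have h1 := integrable_theta_exp_mul hy (Fd c) (continuous_Fd hc) (BFd c)
        (fun θ h => abs_Fd_le hc h)
      have h2 := (integrable_theta_exp_mul hy (Fc c) (continuous_Fc hc) (BF c)
        (fun θ h => abs_Fc_le hc h)).const_mul y
      apply (h1.sub h2).congr
      apply Filter.Eventually.of_forall
      intro θ
      simp only [Pi.sub_apply]
      ring
  have hderiv : ∀ θ ∈ Ici (0:ℝ), HasDerivAt (fun t => t * (Real.exp (-y * t) * Fc c t))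
      (Real.exp (-y * θ) * Fc c θ +
        θ * (Real.exp (-y * θ) * Fd c θ - y * (Real.exp (-y * θ) * Fc c θ))) θ := by
    intro θ _
    have h1 := (hasDerivAt_id θ).mul (hasDerivAt_exp_mul (y := y) (hasDerivAt_Fc hc θ))
    exact h1.congr_deriv (by rw [id_eq]; ring)
  have htend : Tendsto (fun θ => θ * (Real.exp (-y * θ) * Fc c θ)) atTop (𝓝 0) :=
    tendsto_theta_exp_mul_zero hy (Fc c) (BF c) (fun θ h => abs_Fc_le hc h)
  have := integral_Ioi_of_hasDerivAt_of_tendsto' hderiv hint htend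
  rw [this]
  norm_num

lemma ibp3 (hc : 0 < c) (hy : 0 < y) :
    ∫ θ in Ioi (0:ℝ), (Real.exp (-y * θ) * Fd c θ +
      θ * (Real.exp (-y * θ) * Fdd c θ - y * (Real.exp (-y * θ) * Fd c θ))) = 0 := by
  have hint : IntegrableOn (fun θ => Real.exp (-y * θ) * Fd c θ +
      θ * (Real.exp (-y * θ) * Fdd c θ - y * (Real.exp (-y * θ) * Fd c θ))) (Ioi 0) := by
    apply Integrable.add
    · exact integrable_exp_mul hy (Fd c) (continuous_Fd hc) (BFd c) (fun θ h => abs_Fd_le hc h)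
    · have h1 := integrable_theta_exp_mul hy (Fdd c) (continuous_Fdd hc) (BFdd c)
        (fun θ h => abs_Fdd_le hc h)
      have h2 := (integrable_theta_exp_mul hy (Fd c) (continuous_Fd hc) (BFd c)
        (fun θ h => abs_Fd_le hc h)).const_mul y
      apply (h1.sub h2).congr
      apply Filter.Eventually.of_forall
      intro θ
      simp only [Pi.sub_apply]
      ring
  have hderiv : ∀ θ ∈ Ici (0:ℝ), HasDerivAt (fun t => t * (Real.exp (-y * t) * Fd c t))
      (Real.exp (-y * θ) * Fd c θ +
        θ * (Real.exp (-y * θ) * Fdd c θ - y * (Real.exp (-y * θ) * Fd c θ))) θ := by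
    intro θ _
    have h1 := (hasDerivAt_id θ).mul (hasDerivAt_exp_mul (y := y) (hasDerivAt_Fd hc θ))
    exact h1.congr_deriv (by rw [id_eq]; ring)
  have htend : Tendsto (fun θ => θ * (Real.exp (-y * θ) * Fd c θ)) atTop (𝓝 0) :=
    tendsto_theta_exp_mul_zero hy (Fd c) (BFd c) (fun θ h => abs_Fd_le hc h)
  have := integral_Ioi_of_hasDerivAt_of_tendsto' hderiv hint htend
  rw [this]
  norm_num

end IBP

/-! ### The Laplace transform and its derivative -/

noncomputable def lap (c z : ℝ) : ℝ := ∫ θ in Ioi (0:ℝ), Real.exp (-z * θ) * Fc c θ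
noncomputable def lapC (c z : ℝ) : ℝ := ∫ θ in Ioi (0:ℝ), θ * (Real.exp (-z * θ) * Fc c θ)

lemma hasDerivAt_lap {c y : ℝ} (hc : 0 < c) (hy : 0 < y) :
    HasDerivAt (lap c) (-(lapC c y)) y := by
  have hε : 0 < y / 2 := half_pos hy
  have hbint : Integrable (fun θ => BF c * (θ * Real.exp (-(y / 2) * θ)))
      (volume.restrict (Ioi 0)) := by
    have h := (integrable_theta_exp_mul hε (fun _ => 1) continuous_const 1
      (by intro θ _; simp)).const_mul (BF c)
    apply h.congr
    apply Filter.Eventually.of_forall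
    intro θ
    simp only []
    ring
  have main := hasDerivAt_integral_of_dominated_loc_of_deriv_le
    (μ := volume.restrict (Ioi 0))
    (F := fun z θ => Real.exp (-z * θ) * Fc c θ)
    (F' := fun z θ => -(θ * (Real.exp (-z * θ) * Fc c θ)))
    (x₀ := y)
    (bound := fun θ => BF c * (θ * Real.exp (-(y / 2) * θ)))
    (s := Metric.ball y (y / 2)) (Metric.ball_mem_nhds y hε)
    (Filter.Eventually.of_forall fun z =>
      ((Continuous.mul (by continuity) (continuous_Fc hc)).aestronglyMeasurable.restrict))
    (integrable_exp_mul hy (Fc c) (continuous_Fc hc) (BF c) (fun θ h => abs_Fc_le hc h))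
    ((Continuous.neg (continuous_id.mul (Continuous.mul (by continuity)
      (continuous_Fc hc)))).aestronglyMeasurable.restrict)
    ?_ hbint ?_
  · exact main.2.congr_deriv (by rw [integral_neg, lapC])
  · rw [ae_restrict_iff' measurableSet_Ioi]
    apply Filter.Eventually.of_forall
    intro θ hθ z hz
    have hθ0 : (0:ℝ) < θ := hθ
    have hz2 : y / 2 < z := by
      have := Metric.mem_ball.mp hz
      rw [Real.dist_eq, abs_lt] at this
      linarith [this.1]
    have hexp : Real.exp (-z * θ) ≤ Real.exp (-(y / 2) * θ) := by
      apply Real.exp_le_exp.mpr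
      nlinarith
    rw [Real.norm_eq_abs, abs_neg, abs_mul, abs_mul, abs_of_pos hθ0,
      abs_of_pos (Real.exp_pos _)]
    calc θ * (Real.exp (-z * θ) * |Fc c θ|)
        ≤ θ * (Real.exp (-(y / 2) * θ) * (BF c)) := by
          apply mul_le_mul_of_nonneg_left _ hθ0.le
          exact mul_le_mul hexp (abs_Fc_le hc hθ0.le) (abs_nonneg _) (Real.exp_pos _).le
      _ = BF c * (θ * Real.exp (-(y / 2) * θ)) := by ring
  · apply Filter.Eventually.of_forall
    intro θ z hz
    have hlin : HasDerivAt (fun w : ℝ => -w * θ) (-θ) z := by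
      simpa using (hasDerivAt_id z).neg.mul_const θ
    have h2 := ((Real.hasDerivAt_exp (-z * θ)).comp z hlin).mul_const (Fc c θ)
    have h3 : HasDerivAt (fun w : ℝ => Real.exp (-w * θ) * Fc c θ)
        (Real.exp (-z * θ) * -θ * Fc c θ) z := h2
    exact h3.congr_deriv (by ring)

lemma lap_ode {c y : ℝ} (hc : 0 < c) (hy : 0 < y) :
    (y ^ 2 + 4 * c) * (-(lapC c y)) = y * lap c y - 2 * c := by
  have iF := integrable_exp_mul hy (Fc c) (continuous_Fc hc) (BF c) (fun θ h => abs_Fc_le hc h)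
  have iFd := integrable_exp_mul hy (Fd c) (continuous_Fd hc) (BFd c) (fun θ h => abs_Fd_le hc h)
  have itF := integrable_theta_exp_mul hy (Fc c) (continuous_Fc hc) (BF c)
    (fun θ h => abs_Fc_le hc h)
  have itFd := integrable_theta_exp_mul hy (Fd c) (continuous_Fd hc) (BFd c)
    (fun θ h => abs_Fd_le hc h)
  have itFdd := integrable_theta_exp_mul hy (Fdd c) (continuous_Fdd hc) (BFdd c)
    (fun θ h => abs_Fdd_le hc h)
  set g := lap c y with hg
  set C := lapC c y with hC
  set B := ∫ θ in Ioi (0:ℝ), Real.exp (-y * θ) * Fd c θ with hB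
  set D := ∫ θ in Ioi (0:ℝ), θ * (Real.exp (-y * θ) * Fd c θ) with hD
  set A := ∫ θ in Ioi (0:ℝ), θ * (Real.exp (-y * θ) * Fdd c θ) with hA
  -- equation 1 : B = y * g - c
  have h1 : B = y * g - c := by
    have e := ibp1 hc hy
    rw [integral_sub iFd (iF.const_mul y), integral_const_mul] at e
    rw [hB, hg, lap]
    linarith [e]
  -- equation 2 : g + D - y * C = 0
  have h2 : g + D - y * C = 0 := by
    have e := ibp2 hc hy
    have ecg : (∫ θ in Ioi (0:ℝ), (Real.exp (-y * θ) * Fc c θ +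
        θ * (Real.exp (-y * θ) * Fd c θ - y * (Real.exp (-y * θ) * Fc c θ)))) =
        ∫ θ in Ioi (0:ℝ), ((Real.exp (-y * θ) * Fc c θ + θ * (Real.exp (-y * θ) * Fd c θ))
          - y * (θ * (Real.exp (-y * θ) * Fc c θ))) := by
      apply integral_congr_ae
      apply Filter.Eventually.of_forall
      intro θ
      ring
    have hadd : IntegrableOn (fun θ => Real.exp (-y * θ) * Fc c θ +
        θ * (Real.exp (-y * θ) * Fd c θ)) (Ioi 0) := iF.add itFd
    rw [ecg, integral_sub hadd (itF.const_mul y), integral_add iF itFd,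
      integral_const_mul] at e
    rw [hg, hD, hC, lap, lapC]
    linarith [e]
  -- equation 3 : B + A - y * D = 0
  have h3 : B + A - y * D = 0 := by
    have e := ibp3 hc hy
    have ecg : (∫ θ in Ioi (0:ℝ), (Real.exp (-y * θ) * Fd c θ +
        θ * (Real.exp (-y * θ) * Fdd c θ - y * (Real.exp (-y * θ) * Fd c θ)))) =
        ∫ θ in Ioi (0:ℝ), ((Real.exp (-y * θ) * Fd c θ + θ * (Real.exp (-y * θ) * Fdd c θ))
          - y * (θ * (Real.exp (-y * θ) * Fd c θ))) := by
      apply integral_congr_ae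
      apply Filter.Eventually.of_forall
      intro θ
      ring
    have hadd : IntegrableOn (fun θ => Real.exp (-y * θ) * Fd c θ +
        θ * (Real.exp (-y * θ) * Fdd c θ)) (Ioi 0) := iFd.add itFdd
    rw [ecg, integral_sub hadd (itFd.const_mul y), integral_add iFd itFdd,
      integral_const_mul] at e
    rw [hB, hA, hD]
    linarith [e]
  -- equation 4 : A + 3 * B + 4 * c * C = 0
  have h4 : A + 3 * B + 4 * c * C = 0 := by
    have ecg : A = ∫ θ in Ioi (0:ℝ), ((-3) * (Real.exp (-y * θ) * Fd c θ) +
        (-(4 * c)) * (θ * (Real.exp (-y * θ) * Fc c θ))) := by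
      rw [hA]
      apply integral_congr_ae
      apply Filter.Eventually.of_forall
      intro θ
      have hode := Fc_ode hc θ
      linear_combination Real.exp (-y * θ) * hode
    rw [integral_add (iFd.const_mul (-3)) (itF.const_mul (-(4 * c))),
      integral_const_mul, integral_const_mul] at ecg
    rw [hB, hC, lapC] at *
    linarith [ecg]
  linear_combination 2 * h1 + y * h2 + h3 - h4

/-! ### The target function and the uniqueness argument -/

lemma hasDerivAt_sqrt_quad {c : ℝ} (hc : 0 < c) (z : ℝ) :
    HasDerivAt (fun w : ℝ => Real.sqrt (w ^ 2 + 4 * c))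
      (z / Real.sqrt (z ^ 2 + 4 * c)) z := by
  have hpos : 0 < z ^ 2 + 4 * c := by positivity
  have h1 : HasDerivAt (fun w : ℝ => w ^ 2 + 4 * c) (2 * z) z := by
    have := (hasDerivAt_pow 2 z).add_const (4 * c)
    exact this.congr_deriv (by norm_num)
  have h2 := (Real.hasDerivAt_sqrt (ne_of_gt hpos)).comp z h1
  have hu0 : (0:ℝ) < Real.sqrt (z ^ 2 + 4 * c) := Real.sqrt_pos.mpr hpos
  refine h2.congr_deriv ?_
  field_simp

lemma hasDerivAt_target {c : ℝ} (hc : 0 < c) (z : ℝ) :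
    HasDerivAt (fun w : ℝ => (-w + Real.sqrt (w ^ 2 + 4 * c)) / 2)
      ((-1 + z / Real.sqrt (z ^ 2 + 4 * c)) / 2) z := by
  have h1 := ((hasDerivAt_id z).neg.add (hasDerivAt_sqrt_quad hc z)).div_const 2
  exact h1

lemma target_ode {c : ℝ} (hc : 0 < c) (z : ℝ) :
    (z ^ 2 + 4 * c) * ((-1 + z / Real.sqrt (z ^ 2 + 4 * c)) / 2) =
      z * ((-z + Real.sqrt (z ^ 2 + 4 * c)) / 2) - 2 * c := by
  have hpos : 0 < z ^ 2 + 4 * c := by positivity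
  have hu0 : (0:ℝ) < Real.sqrt (z ^ 2 + 4 * c) := Real.sqrt_pos.mpr hpos
  have hu2 : Real.sqrt (z ^ 2 + 4 * c) ^ 2 = z ^ 2 + 4 * c := Real.sq_sqrt hpos.le
  have hcan : z / Real.sqrt (z ^ 2 + 4 * c) * Real.sqrt (z ^ 2 + 4 * c) = z :=
    div_mul_cancel₀ z (ne_of_gt hu0)
  nth_rewrite 1 [← hu2]
  calc Real.sqrt (z ^ 2 + 4 * c) ^ 2 * ((-1 + z / Real.sqrt (z ^ 2 + 4 * c)) / 2)
      = (-(Real.sqrt (z ^ 2 + 4 * c) ^ 2) + (z / Real.sqrt (z ^ 2 + 4 * c) *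
          Real.sqrt (z ^ 2 + 4 * c)) * Real.sqrt (z ^ 2 + 4 * c)) / 2 := by ring
    _ = (-(Real.sqrt (z ^ 2 + 4 * c) ^ 2) + z * Real.sqrt (z ^ 2 + 4 * c)) / 2 := by
        rw [hcan]
    _ = z * ((-z + Real.sqrt (z ^ 2 + 4 * c)) / 2) - 2 * c := by
        linear_combination (-(1:ℝ) / 2) * hu2

lemma integral_exp_neg_mul_Ioi {z : ℝ} (hz : 0 < z) :
    ∫ θ in Ioi (0:ℝ), Real.exp (-z * θ) = 1 / z := by
  have hderiv : ∀ θ ∈ Ici (0:ℝ), HasDerivAt (fun t => -Real.exp (-z * t) / z)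
      (Real.exp (-z * θ)) θ := by
    intro θ _
    have h2 := (hasDerivAt_exp_neg (y := z) (θ := θ)).neg.div_const z
    refine h2.congr_deriv ?_
    field_simp
  have hint : IntegrableOn (fun θ => Real.exp (-z * θ)) (Ioi 0) := exp_neg_integrableOn_Ioi 0 hz
  have htend : Tendsto (fun θ => -Real.exp (-z * θ) / z) atTop (𝓝 0) := by
    have := ((tendsto_exp_neg_mul hz).neg).div_const z
    simpa using this
  have := integral_Ioi_of_hasDerivAt_of_tendsto' hderiv hint htend
  rw [this]
  field_simp
  simp

lemma abs_lap_le {c z : ℝ} (hc : 0 < c) (hz : 0 < z) : |lap c z| ≤ BF c * (1 / z) := by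
  have hbound : ∀ᵐ θ ∂(volume.restrict (Ioi (0:ℝ))),
      ‖Real.exp (-z * θ) * Fc c θ‖ ≤ BF c * Real.exp (-z * θ) := by
    rw [ae_restrict_iff' measurableSet_Ioi]
    apply Filter.Eventually.of_forall
    intro θ hθ
    rw [Real.norm_eq_abs, abs_mul, abs_of_pos (Real.exp_pos _)]
    calc Real.exp (-z * θ) * |Fc c θ| ≤ Real.exp (-z * θ) * BF c :=
        mul_le_mul_of_nonneg_left (abs_Fc_le hc (le_of_lt hθ)) (Real.exp_pos _).le
      _ = BF c * Real.exp (-z * θ) := by ring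
  have h := norm_integral_le_of_norm_le ((exp_neg_integrableOn_Ioi 0 hz).const_mul (BF c)) hbound
  rw [Real.norm_eq_abs] at h
  calc |lap c z| ≤ ∫ θ in Ioi (0:ℝ), BF c * Real.exp (-z * θ) := h
    _ = BF c * (1 / z) := by rw [integral_const_mul, integral_exp_neg_mul_Ioi hz]

lemma target_nonneg {c : ℝ} (hc : 0 < c) {z : ℝ} (hz : 0 < z) :
    0 ≤ (-z + Real.sqrt (z ^ 2 + 4 * c)) / 2 := by
  have h1 : z ≤ Real.sqrt (z ^ 2 + 4 * c) := by
    rw [Real.le_sqrt hz.le (by positivity)]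
    nlinarith
  linarith

lemma target_le {c : ℝ} (hc : 0 < c) {z : ℝ} (hz : 0 < z) :
    (-z + Real.sqrt (z ^ 2 + 4 * c)) / 2 ≤ Real.sqrt c := by
  have hsc : (0:ℝ) ≤ Real.sqrt c := Real.sqrt_nonneg c
  have h1 : Real.sqrt (z ^ 2 + 4 * c) ≤ z + 2 * Real.sqrt c := by
    rw [show z + 2 * Real.sqrt c = Real.sqrt ((z + 2 * Real.sqrt c) ^ 2) by
      rw [Real.sqrt_sq (by positivity)]]
    apply Real.sqrt_le_sqrt
    nlinarith [Real.sq_sqrt hc.le]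
  linarith

lemma lap_eq_target {c : ℝ} (hc : 0 < c) {a : ℝ} (ha : 0 < a) :
    lap c a = (-a + Real.sqrt (a ^ 2 + 4 * c)) / 2 := by
  set Φ : ℝ → ℝ := fun w =>
    (lap c w - (-w + Real.sqrt (w ^ 2 + 4 * c)) / 2) / Real.sqrt (w ^ 2 + 4 * c) with hΦ
  have hkey : ∀ z : ℝ, 0 < z → HasDerivAt Φ 0 z := by
    intro z hz
    have hpos : 0 < z ^ 2 + 4 * c := by positivity
    have hu0 : (0:ℝ) < Real.sqrt (z ^ 2 + 4 * c) := Real.sqrt_pos.mpr hpos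
    have hu2 : Real.sqrt (z ^ 2 + 4 * c) ^ 2 = z ^ 2 + 4 * c := Real.sq_sqrt hpos.le
    have hsq : Real.sqrt (z ^ 2 + 4 * c) * Real.sqrt (z ^ 2 + 4 * c) = z ^ 2 + 4 * c :=
      Real.mul_self_sqrt hpos.le
    have hG := hasDerivAt_lap hc hz
    have hH := hasDerivAt_target hc z
    have hs := hasDerivAt_sqrt_quad hc z
    have hdiv := (hG.sub hH).div hs (ne_of_gt hu0)
    have e1 : (-(lapC c z) - (-1 + z / Real.sqrt (z ^ 2 + 4 * c)) / 2) * (z ^ 2 + 4 * c) =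
        z * (lap c z - (-z + Real.sqrt (z ^ 2 + 4 * c)) / 2) := by
      linear_combination lap_ode hc hz - target_ode hc z
    have eA : (-(lapC c z) - (-1 + z / Real.sqrt (z ^ 2 + 4 * c)) / 2) *
        Real.sqrt (z ^ 2 + 4 * c) =
        z * (lap c z - (-z + Real.sqrt (z ^ 2 + 4 * c)) / 2) / Real.sqrt (z ^ 2 + 4 * c) := by
      rw [eq_div_iff (ne_of_gt hu0), mul_assoc, hsq]
      exact e1
    have e2 : ((-(lapC c z) - (-1 + z / Real.sqrt (z ^ 2 + 4 * c)) / 2) *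
        Real.sqrt (z ^ 2 + 4 * c) -
        (lap c z - (-z + Real.sqrt (z ^ 2 + 4 * c)) / 2) *
          (z / Real.sqrt (z ^ 2 + 4 * c))) / Real.sqrt (z ^ 2 + 4 * c) ^ 2 = 0 := by
      rw [eA]
      rw [div_eq_zero_iff]
      left
      ring
    exact hdiv.congr_deriv e2
  have hconst : ∀ b : ℝ, a ≤ b → Φ b = Φ a := by
    intro b hab
    have hcont : ContinuousOn Φ (Icc a b) := fun x hx =>
      (hkey x (lt_of_lt_of_le ha hx.1)).continuousAt.continuousWithinAt
    have hder : ∀ x ∈ Ico a b, HasDerivWithinAt Φ 0 (Ici x) x := fun x hx =>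
      (hkey x (lt_of_lt_of_le ha hx.1)).hasDerivWithinAt
    exact constant_of_has_deriv_right_zero hcont hder b (right_mem_Icc.mpr hab)
  have hlim : Tendsto Φ atTop (𝓝 0) := by
    apply squeeze_zero_norm' (a := fun z => (BF c + Real.sqrt c) * (1 / z))
    · filter_upwards [eventually_ge_atTop (max a 1)] with z hzm
      have hz1 : (1:ℝ) ≤ z := le_trans (le_max_right a 1) hzm
      have hz : 0 < z := lt_of_lt_of_le one_pos hz1
      have hpos : 0 < z ^ 2 + 4 * c := by positivity
      have hu0 : (0:ℝ) < Real.sqrt (z ^ 2 + 4 * c) := Real.sqrt_pos.mpr hpos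
      have hzu : z ≤ Real.sqrt (z ^ 2 + 4 * c) := by
        rw [Real.le_sqrt hz.le (by positivity)]
        nlinarith
      have hlapb := abs_lap_le hc hz
      have hH0 := target_nonneg hc hz
      have hH1 := target_le hc (z := z) hz
      have hBF0 := BF_nonneg hc
      have hnum : |lap c z - (-z + Real.sqrt (z ^ 2 + 4 * c)) / 2| ≤ BF c + Real.sqrt c := by
        refine (abs_sub _ _).trans ?_
        rw [abs_of_nonneg hH0]
        have : |lap c z| ≤ BF c := by
          calc |lap c z| ≤ BF c * (1 / z) := hlapb
            _ ≤ BF c * 1 := by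
              apply mul_le_mul_of_nonneg_left _ hBF0
              rw [div_le_one hz]
              exact hz1
            _ = BF c := mul_one _
        linarith
      rw [hΦ]
      simp only [Real.norm_eq_abs]
      rw [abs_div, abs_of_pos hu0]
      calc |lap c z - (-z + Real.sqrt (z ^ 2 + 4 * c)) / 2| / Real.sqrt (z ^ 2 + 4 * c)
          ≤ (BF c + Real.sqrt c) / Real.sqrt (z ^ 2 + 4 * c) := by
            gcongr
        _ ≤ (BF c + Real.sqrt c) / z := by
            have hnn : (0:ℝ) ≤ BF c + Real.sqrt c := by
              linarith [BF_nonneg hc, Real.sqrt_nonneg c]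
            gcongr
        _ = (BF c + Real.sqrt c) * (1 / z) := by ring
    · have := tendsto_inv_atTop_zero.const_mul (BF c + Real.sqrt c)
      simpa [one_div] using this
  have hev : (fun _ : ℝ => Φ a) =ᶠ[atTop] Φ := by
    filter_upwards [eventually_ge_atTop a] with b hb
    exact (hconst b hb).symm
  have hΦa : Φ a = 0 := by
    have h0 : Tendsto (fun _ : ℝ => Φ a) atTop (𝓝 0) := hlim.congr' hev.symm
    exact tendsto_nhds_unique tendsto_const_nhds h0
  have hposa : 0 < a ^ 2 + 4 * c := by positivity
  have hu0a : (0:ℝ) < Real.sqrt (a ^ 2 + 4 * c) := Real.sqrt_pos.mpr hposa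
  rw [hΦ] at hΦa
  simp only [] at hΦa
  rw [div_eq_zero_iff] at hΦa
  rcases hΦa with h | h
  · linarith
  · exact absurd h (ne_of_gt hu0a)

end LaplaceAux

/-- Laplace transform computation in the proof of Theorem 3.2: for `c > 0` and `y > 0`,
`∫₀^∞ e^{-yθ} (√c/θ) J₁(2θ√c) dθ = (-y + √(y² + 4c))/2`. -/
theorem laplace_transform_Fc (c y : ℝ) (hc : 0 < c) (hy : 0 < y) :
    IntegrableOn (fun θ : ℝ => Real.exp (-y * θ) * Fc c θ) (Set.Ici 0) ∧
    ∫ θ in Set.Ici (0 : ℝ), Real.exp (-y * θ) * Fc c θ =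
      (-y + Real.sqrt (y ^ 2 + 4 * c)) / 2 := by
  constructor
  · rw [integrableOn_Ici_iff_integrableOn_Ioi]
    exact LaplaceAux.integrable_exp_mul hy (Fc c) (LaplaceAux.continuous_Fc hc)
      (LaplaceAux.BF c) (fun θ h => LaplaceAux.abs_Fc_le hc h)
  · rw [integral_Ici_eq_integral_Ioi]
    exact LaplaceAux.lap_eq_target hc hy
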